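/- Let ε > 0, let b₁, b₂: Ū → ℝⁿ be continuous, let f₁, f₂: U → ℝ be continuous with f₁, f₂ ≥ 0 in U, and let the constants c₁₁, c₁₂, c₂₁, c₂₂ satisfy (H3.2) and (H3.3). If z₁, z₂ ∈ C²(U) ∩ C(Ū) satisfy c₁₁z₁ + c₁₂z₂ + b₁(x)·Dz₁ − εΔz₁ = f₁ and c₂₁z₁ + c₂₂z₂ + b₂(x)·Dz₂ − εΔz₂ = f₂ in U, with z₁ = z₂ = 0 on ∂U, then z₁ ≥ 0 and z₂ ≥ 0 on Ū. -/

import Mathlib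

open Set Filter Topology

noncomputable def lap {n : ℕ} (u : EuclideanSpace ℝ (Fin n) → ℝ) (x : EuclideanSpace ℝ (Fin n)) : ℝ :=
  ∑ i : Fin n, fderiv ℝ (fun y => fderiv ℝ u y (EuclideanSpace.single i 1)) x
    (EuclideanSpace.single i 1)

lemma second_deriv_nonneg {g : ℝ → ℝ} {c : ℝ} (hmin : IsLocalMin g 0)
    (hg : ∀ᶠ t in 𝓝 (0:ℝ), DifferentiableAt ℝ g t)
    (hder : HasDerivAt (deriv g) c 0) : 0 ≤ c := by
  by_contra hc
  push_neg at hc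
  have h0 : deriv g 0 = 0 := hmin.deriv_eq_zero
  have hslope := hasDerivAt_iff_tendsto_slope.mp hder
  have h1 : ∀ᶠ t in 𝓝[>] (0:ℝ), deriv g t < 0 := by
    have hIio : Iio (c/2) ∈ 𝓝 c := Iio_mem_nhds (by linarith)
    have h2 := (hslope.mono_left (nhdsWithin_mono 0 (fun t (ht : t ∈ Ioi (0:ℝ)) => ne_of_gt ht))).eventually hIio
    filter_upwards [h2, self_mem_nhdsWithin] with t ht ht0
    have ht0' : (0:ℝ) < t := ht0
    have : slope (deriv g) 0 t = deriv g t / t := by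
      simp [slope, h0]; ring
    rw [this] at ht
    have := (div_lt_iff₀ ht0').mp ht
    nlinarith
  obtain ⟨δ₁, hδ₁, hsub⟩ := mem_nhdsGT_iff_exists_Ioo_subset.mp h1
  have hδ₁0 : (0:ℝ) < δ₁ := by simpa using hδ₁
  have hmem : {t : ℝ | DifferentiableAt ℝ g t ∧ g 0 ≤ g t} ∈ 𝓝 (0:ℝ) := hg.and hmin
  obtain ⟨δ₂, hδ₂, hball⟩ := Metric.mem_nhds_iff.mp hmem
  set δ : ℝ := min (δ₁/2) (δ₂/2) with hδdef
  have hδ0 : 0 < δ := lt_min (by linarith) (by linarith)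
  have hIccsub : ∀ t ∈ Icc (0:ℝ) δ, DifferentiableAt ℝ g t ∧ g 0 ≤ g t := by
    intro t ht
    apply hball
    have : |t| < δ₂ := by
      rw [abs_of_nonneg ht.1]
      calc t ≤ δ := ht.2
        _ ≤ δ₂/2 := min_le_right _ _
        _ < δ₂ := by linarith
    simpa [Real.dist_eq] using this
  have hanti : StrictAntiOn g (Icc 0 δ) := by
    apply strictAntiOn_of_deriv_neg (convex_Icc 0 δ)
    · exact fun t ht => ((hIccsub t ht).1).continuousAt.continuousWithinAt
    · intro t ht
      rw [interior_Icc] at ht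
      apply hsub
      exact ⟨ht.1, lt_of_lt_of_le ht.2 (le_trans (min_le_left _ _) (by linarith))⟩
  have : g δ < g 0 := hanti (left_mem_Icc.mpr hδ0.le) (right_mem_Icc.mpr hδ0.le) hδ0
  exact absurd ((hIccsub δ (right_mem_Icc.mpr hδ0.le)).2) (not_le.mpr this)

lemma dir_second_nonneg {n : ℕ} {U : Set (EuclideanSpace ℝ (Fin n))} (hUo : IsOpen U)
    {u : EuclideanSpace ℝ (Fin n) → ℝ} (hu : ContDiffOn ℝ 2 u U)
    {x₀ : EuclideanSpace ℝ (Fin n)} (hx₀ : x₀ ∈ U) (hmin : IsLocalMin u x₀)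
    (v : EuclideanSpace ℝ (Fin n)) :
    0 ≤ fderiv ℝ (fun y => fderiv ℝ u y v) x₀ v := by
  set ℓ : ℝ → EuclideanSpace ℝ (Fin n) := fun t => x₀ + t • v with hℓdef
  have hℓd : ∀ t : ℝ, HasDerivAt ℓ v t := by
    intro t
    simpa [hℓdef] using ((hasDerivAt_id t).smul_const v).const_add x₀
  have hℓ0 : ℓ 0 = x₀ := by simp [hℓdef]
  have hℓc : Continuous ℓ := by continuity
  have hVopen : IsOpen (ℓ ⁻¹' U) := hUo.preimage hℓc
  have h0V : (0:ℝ) ∈ ℓ ⁻¹' U := by simp [hℓ0, hx₀]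
  have hudiff : ∀ y ∈ U, DifferentiableAt ℝ u y := fun y hy =>
    ((hu.differentiableOn (by norm_num)).differentiableAt (hUo.mem_nhds hy))
  set g : ℝ → ℝ := fun t => u (ℓ t) with hgdef
  have hgd : ∀ t ∈ ℓ ⁻¹' U, HasDerivAt g (fderiv ℝ u (ℓ t) v) t := by
    intro t ht
    exact ((hudiff (ℓ t) ht).hasFDerivAt).comp_hasDerivAt t (hℓd t)
  have hderivg : ∀ t ∈ ℓ ⁻¹' U, deriv g t = fderiv ℝ u (ℓ t) v :=
    fun t ht => (hgd t ht).deriv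
  -- h := fun y => fderiv u y v, differentiable at x₀
  set h : EuclideanSpace ℝ (Fin n) → ℝ := fun y => fderiv ℝ u y v with hhdef
  have hfd : ContDiffOn ℝ 1 (fun y => fderiv ℝ u y) U :=
    hu.fderiv_of_isOpen hUo (by norm_num)
  have hh : DifferentiableAt ℝ h x₀ := by
    have h1 : DifferentiableAt ℝ (fun y => fderiv ℝ u y) x₀ :=
      (hfd.differentiableOn (by norm_num)).differentiableAt (hUo.mem_nhds hx₀)
    exact (ContinuousLinearMap.apply ℝ ℝ v).differentiableAt.comp x₀ h1
  have hcomp : HasDerivAt (fun t => h (ℓ t)) (fderiv ℝ h x₀ v) 0 := by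
    have hh' : HasFDerivAt h (fderiv ℝ h x₀) (ℓ 0) := hℓ0 ▸ hh.hasFDerivAt
    exact hh'.comp_hasDerivAt 0 (hℓd 0)
  have heq : deriv g =ᶠ[𝓝 (0:ℝ)] fun t => h (ℓ t) := by
    filter_upwards [hVopen.mem_nhds h0V] with t ht
    exact hderivg t ht
  have hder2 : HasDerivAt (deriv g) (fderiv ℝ h x₀ v) 0 :=
    hcomp.congr_of_eventuallyEq heq
  have hgmin : IsLocalMin g 0 := by
    have htend : Tendsto ℓ (𝓝 0) (𝓝 x₀) := by
      rw [← hℓ0]; exact hℓc.tendsto 0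
    have := htend.eventually hmin
    simpa [IsLocalMin, IsMinFilter, hgdef, hℓ0] using this
  have hgdiff : ∀ᶠ t in 𝓝 (0:ℝ), DifferentiableAt ℝ g t := by
    filter_upwards [hVopen.mem_nhds h0V] with t ht
    exact (hgd t ht).differentiableAt
  exact second_deriv_nonneg hgmin hgdiff hder2

lemma no_neg_min {n : ℕ} {U : Set (EuclideanSpace ℝ (Fin n))} (hUo : IsOpen U)
    {ε : ℝ} (hε : 0 < ε) (b : EuclideanSpace ℝ (Fin n) → EuclideanSpace ℝ (Fin n))
    {c d α fv zzv : ℝ} (hα : 0 < α) (hd : d ≤ 0) (hcd : α ≤ c + d) (hfv : 0 ≤ fv)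
    {z : EuclideanSpace ℝ (Fin n) → ℝ} (hz2 : ContDiffOn ℝ 2 z U)
    {x₀ : EuclideanSpace ℝ (Fin n)} (hx₀ : x₀ ∈ U) (hmin : IsLocalMin z x₀)
    (hneg : z x₀ < 0) (hle : z x₀ ≤ zzv)
    (hpde : c * z x₀ + d * zzv + (inner ℝ (b x₀) (gradient z x₀) : ℝ) - ε * lap z x₀ = fv) :
    False := by
  have hgrad : gradient z x₀ = 0 := by
    simp [gradient, hmin.fderiv_eq_zero]
  have hinner : (inner ℝ (b x₀) (gradient z x₀) : ℝ) = 0 := by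
    rw [hgrad, inner_zero_right]
  have hlap : 0 ≤ lap z x₀ :=
    Finset.sum_nonneg fun i _ => dir_second_nonneg hUo hz2 hx₀ hmin _
  rw [hinner] at hpde
  have h1 : d * zzv ≤ d * z x₀ := mul_le_mul_of_nonpos_left hle hd
  have h2 : (c + d) * z x₀ ≤ α * z x₀ := mul_le_mul_of_nonpos_right hcd hneg.le
  nlinarith [mul_nonneg hε.le hlap, mul_neg_of_pos_of_neg hα hneg]

theorem stmt_7
    {n : ℕ} (hn : 2 ≤ n)
    (U : Set (EuclideanSpace ℝ (Fin n))) (hUo : IsOpen U) (hUb : Bornology.IsBounded U)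
    (ε : ℝ) (hε : 0 < ε)
    (b₁ b₂ : EuclideanSpace ℝ (Fin n) → EuclideanSpace ℝ (Fin n)) (hb₁ : ContinuousOn b₁ (closure U)) (hb₂ : ContinuousOn b₂ (closure U))
    (f₁ f₂ : EuclideanSpace ℝ (Fin n) → ℝ) (hf₁c : ContinuousOn f₁ U) (hf₂c : ContinuousOn f₂ U)
    (hf₁ : ∀ x ∈ U, 0 ≤ f₁ x) (hf₂ : ∀ x ∈ U, 0 ≤ f₂ x)
    (c₁₁ c₁₂ c₂₁ c₂₂ α : ℝ) (hα : 0 < α)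
    (h32a : c₁₂ ≤ 0) (h32b : c₂₁ ≤ 0)
    (h33a : α ≤ c₁₁ + c₁₂) (h33b : α ≤ c₂₁ + c₂₂)
    (z₁ z₂ : EuclideanSpace ℝ (Fin n) → ℝ)
    (hz₁2 : ContDiffOn ℝ 2 z₁ U) (hz₁c : ContinuousOn z₁ (closure U))
    (hz₂2 : ContDiffOn ℝ 2 z₂ U) (hz₂c : ContinuousOn z₂ (closure U))
    (hpde₁ : ∀ x ∈ U, c₁₁ * z₁ x + c₁₂ * z₂ x + (inner ℝ (b₁ x) (gradient z₁ x) : ℝ) - ε * lap z₁ x = f₁ x)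
    (hpde₂ : ∀ x ∈ U, c₂₁ * z₁ x + c₂₂ * z₂ x + (inner ℝ (b₂ x) (gradient z₂ x) : ℝ) - ε * lap z₂ x = f₂ x)
    (hzb₁ : ∀ x ∈ frontier U, z₁ x = 0) (hzb₂ : ∀ x ∈ frontier U, z₂ x = 0) :
    ∀ x ∈ closure U, 0 ≤ z₁ x ∧ 0 ≤ z₂ x := by
  classical
  have hsub : closure U ⊆ U ∪ frontier U := by
    intro x hx
    by_cases h : x ∈ U
    · exact Or.inl h
    · exact Or.inr ⟨hx, by simpa [hUo.interior_eq] using h⟩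
  set w : EuclideanSpace ℝ (Fin n) → ℝ := fun x => min (z₁ x) (z₂ x) with hw
  have hwc : ContinuousOn w (closure U) := fun y hy => (hz₁c y hy).min (hz₂c y hy)
  intro x hx
  have hne : (closure U).Nonempty := ⟨x, hx⟩
  obtain ⟨x₀, hx₀c, hx₀min⟩ := (hUb.isCompact_closure).exists_isMinOn hne hwc
  by_cases hpos : 0 ≤ w x₀
  · have hwx : w x₀ ≤ w x := hx₀min hx
    exact ⟨le_trans (hpos.trans hwx) (min_le_left _ _),
      le_trans (hpos.trans hwx) (min_le_right _ _)⟩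
  push_neg at hpos
  exfalso
  have hx₀U : x₀ ∈ U := by
    rcases hsub hx₀c with h | h
    · exact h
    · exact absurd hpos (by simp [hw, hzb₁ x₀ h, hzb₂ x₀ h])
  rcases le_total (z₁ x₀) (z₂ x₀) with hc | hc
  · have hweq : w x₀ = z₁ x₀ := min_eq_left hc
    have hlm : IsLocalMin z₁ x₀ := by
      filter_upwards [hUo.mem_nhds hx₀U] with y hy
      calc z₁ x₀ = w x₀ := hweq.symm
        _ ≤ w y := hx₀min (subset_closure hy)
        _ ≤ z₁ y := min_le_left _ _
    exact no_neg_min hUo hε b₁ hα h32a h33a (hf₁ x₀ hx₀U) hz₁2 hx₀U hlm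
      (hweq ▸ hpos) hc (hpde₁ x₀ hx₀U)
  · have hweq : w x₀ = z₂ x₀ := min_eq_right hc
    have hlm : IsLocalMin z₂ x₀ := by
      filter_upwards [hUo.mem_nhds hx₀U] with y hy
      calc z₂ x₀ = w x₀ := hweq.symm
        _ ≤ w y := hx₀min (subset_closure hy)
        _ ≤ z₂ y := min_le_right _ _
    exact no_neg_min hUo hε b₂ hα h32b (by linarith : α ≤ c₂₂ + c₂₁) (hf₂ x₀ hx₀U) hz₂2 hx₀U hlm
      (hweq ▸ hpos) hc
      (show c₂₂ * z₂ x₀ + c₂₁ * z₁ x₀ + (inner ℝ (b₂ x₀) (gradient z₂ x₀) : ℝ)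
          - ε * lap z₂ x₀ = f₂ x₀ by linarith [hpde₂ x₀ hx₀U])
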